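/- Let R be a commutative ring and s_1,…,s_k a permutable weak regular sequence of non-unit elements of R. Let α_1,…,α_n ∈ ℕ^k and set a_i = s_1^{α_{i1}}⋯s_k^{α_{ik}}. Then the R-submodule {(c_1,…,c_n) ∈ R^n : c_1a_1+⋯+c_na_n = 0} of R^n is generated by the elements (∏_{l=1}^k s_l^{max(α_{il},α_{jl})−α_{il}})·e_i − (∏_{l=1}^k s_l^{max(α_{il},α_{jl})−α_{jl}})·e_j for 1 ≤ i < j ≤ n, where e_1,…,e_n is the standard basis of R^n. -/

import Mathlib

open MvPolynomial
open scoped MonomialOrder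

namespace PaperGB

variable {n : ℕ} {R : Type*} [CommSemiring R]

/-- The degree (leading exponent) of a multivariate polynomial w.r.t. a monomial order. -/
noncomputable def mDeg (m : MonomialOrder (Fin n)) (f : MvPolynomial (Fin n) R) :
    Fin n →₀ ℕ :=
  m.toSyn.symm (f.support.sup fun d => m.toSyn d)

/-- The leading coefficient. -/
noncomputable def mLC (m : MonomialOrder (Fin n)) (f : MvPolynomial (Fin n) R) : R :=
  f.coeff (mDeg m f)

/-- The leading term. -/
noncomputable def mLT (m : MonomialOrder (Fin n)) (f : MvPolynomial (Fin n) R) :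
    MvPolynomial (Fin n) R :=
  monomial (mDeg m f) (mLC m f)

variable {R : Type*} [CommRing R]

/-- The leading term ideal. -/
noncomputable def mLTIdeal (m : MonomialOrder (Fin n)) (I : Ideal (MvPolynomial (Fin n) R)) :
    Ideal (MvPolynomial (Fin n) R) :=
  Ideal.span ((fun g => mLT m g) '' {g | g ∈ I ∧ g ≠ 0})

/-- `f` is a Gröbner basis of `I`. -/
def IsGroebnerBasis (m : MonomialOrder (Fin n)) (I : Ideal (MvPolynomial (Fin n) R))
    {k : ℕ} (f : Fin k → MvPolynomial (Fin n) R) : Prop :=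
  (∀ i, f i ≠ 0) ∧ (∀ i, f i ∈ I) ∧
    Ideal.span (Set.range fun i => mLT m (f i)) = mLTIdeal m I

/-- `g` reduces to zero modulo the family `f`. -/
def ReducesToZero (m : MonomialOrder (Fin n)) {k : ℕ} (f : Fin k → MvPolynomial (Fin n) R)
    (g : MvPolynomial (Fin n) R) : Prop :=
  ∃ p : Fin k → MvPolynomial (Fin n) R,
    g = ∑ i, p i * f i ∧
    ∀ i, p i * f i ≠ 0 → mDeg m (p i) + mDeg m (f i) ≼[m] mDeg m g

/-- A weakly regular sequence. -/
def IsWeakRegularSeq {k : ℕ} (s : Fin k → R) : Prop :=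
  ∀ i : Fin k, ∀ x : R,
    s i * x ∈ Ideal.span (s '' {j | j < i}) → x ∈ Ideal.span (s '' {j | j < i})

/-- A permutable weak regular sequence of non-units. -/
def IsPermutableWeakRegularSeq {k : ℕ} (s : Fin k → R) : Prop :=
  (∀ i, ¬ IsUnit (s i)) ∧ ∀ σ : Equiv.Perm (Fin k), IsWeakRegularSeq (s ∘ σ)

/-- `M` has a free resolution `0 → F_p → ⋯ → F_0 → M → 0` by finitely generated
free `S`-modules. -/
def HasFiniteFreeResolutionOfLength (S : Type*) [CommRing S] (M : Type*) [AddCommGroup M]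
    [Module S M] (p : ℕ) : Prop :=
  ∃ (d : ℕ → ℕ) (g : ∀ i : ℕ, (Fin (d (i + 1)) → S) →ₗ[S] (Fin (d i) → S))
    (ε : (Fin (d 0) → S) →ₗ[S] M),
    (∀ i, p < i → d i = 0) ∧
    Function.Surjective ε ∧
    LinearMap.range (g 0) = LinearMap.ker ε ∧
    ∀ i, LinearMap.range (g (i + 1)) = LinearMap.ker (g i)

/-- `M` has an infinite free resolution `⋯ → F_p → F_p → F_p → F_{p-1} → ⋯ → F_0 → M → 0`
by finitely generated free `S`-modules, whose modules are constant from stage `p` on. -/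
def HasEventuallyConstantFreeResolution (S : Type*) [CommRing S] (M : Type*) [AddCommGroup M]
    [Module S M] (p : ℕ) : Prop :=
  ∃ (d : ℕ → ℕ) (g : ∀ i : ℕ, (Fin (d (i + 1)) → S) →ₗ[S] (Fin (d i) → S))
    (ε : (Fin (d 0) → S) →ₗ[S] M),
    (∀ i, p ≤ i → d i = d p) ∧
    Function.Surjective ε ∧
    LinearMap.range (g 0) = LinearMap.ker ε ∧
    ∀ i, LinearMap.range (g (i + 1)) = LinearMap.ker (g i)

end PaperGB

open PaperGB

set_option linter.unusedSectionVars false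
set_option linter.unnecessarySeqFocus false
set_option maxHeartbeats 1000000

namespace SyzAux


variable {ι : Type*} [Fintype ι] [DecidableEq ι] {R : Type*} [CommRing R]

/-- product of s l ^ a l -/
def mon (s : ι → R) (a : ι → ℕ) : R := ∏ l, s l ^ a l

def ind (j : ι) : ι → ℕ := fun l => if l = j then 1 else 0

def dsub (a : ι → ℕ) (j : ι) : ι → ℕ := fun l => a l - ind j l

lemma mon_add (s : ι → R) (a b : ι → ℕ) : mon s (fun l => a l + b l) = mon s a * mon s b := by
  simp [mon, pow_add, Finset.prod_mul_distrib]

lemma mon_congr (s : ι → R) {a b : ι → ℕ} (h : ∀ l, a l = b l) : mon s a = mon s b := by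
  have : a = b := funext h
  rw [this]

lemma mon_zero (s : ι → R) : mon s (fun _ => 0) = 1 := by simp [mon]

lemma mon_ind (s : ι → R) (j : ι) : mon s (ind j) = s j := by
  rw [mon]
  rw [Finset.prod_eq_single j (fun l _ hl => by simp [ind, hl]) (by simp)]
  simp [ind]

lemma mon_eq_mul_dsub (s : ι → R) {a : ι → ℕ} {j : ι} (h : a j ≠ 0) :
    mon s a = s j * mon s (dsub a j) := by
  have : mon s a = mon s (fun l => ind j l + dsub a j l) := by
    refine mon_congr s fun l => ?_
    by_cases hl : l = j <;> simp [ind, dsub, hl] <;> omega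
  rw [this, mon_add, mon_ind]

/-- push a span membership through a linear map -/
lemma span_push {M M₂ : Type*} [AddCommGroup M] [AddCommGroup M₂] [Module R M] [Module R M₂]
    (f : M →ₗ[R] M₂) (I : Submodule R M₂) {G : Set M} (h : ∀ g ∈ G, f g ∈ I) {x : M}
    (hx : x ∈ Submodule.span R G) : f x ∈ I := by
  induction hx using Submodule.span_induction with
  | mem g hg => exact h g hg
  | zero => simp
  | add a b _ _ ha hb => rw [map_add]; exact I.add_mem ha hb
  | smul r a _ ha => rw [map_smul]; exact I.smul_mem r ha

lemma mul_mem_of_span {G : Set R} {I : Ideal R} (s : R) (h : ∀ g ∈ G, s * g ∈ I) {x : R}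
    (hx : x ∈ Ideal.span G) : s * x ∈ I := by
  induction hx using Submodule.span_induction with
  | mem g hg => exact h g hg
  | zero => simp
  | add a b _ _ ha hb => rw [mul_add]; exact I.add_mem ha hb
  | smul r a _ ha =>
      have h2 : s * (r • a) = r * (s * a) := by simp [smul_eq_mul]; ring
      rw [h2]
      exact I.mul_mem_left r ha

lemma mem_span_image_finset_iff {κ : Type*} [DecidableEq κ] {f : κ → R} {Λ : Finset κ} {x : R} :
    x ∈ Ideal.span (f '' ↑Λ) ↔ ∃ c : κ → R, x = ∑ a ∈ Λ, c a * f a := by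
  constructor
  · intro hx
    induction hx using Submodule.span_induction with
    | mem g hg =>
        obtain ⟨a, ha, rfl⟩ := hg
        exact ⟨fun b => if b = a then 1 else 0, by
          rw [Finset.sum_eq_single a (fun b _ hb => by simp [hb]) (by simp_all)]; simp⟩
    | zero => exact ⟨0, by simp⟩
    | add a b _ _ ha hb =>
        obtain ⟨c₁, rfl⟩ := ha; obtain ⟨c₂, rfl⟩ := hb
        exact ⟨c₁ + c₂, by simp [add_mul, Finset.sum_add_distrib]⟩
    | smul r a _ ha =>
        obtain ⟨c, rfl⟩ := ha
        exact ⟨fun b => r * c b, by simp [smul_eq_mul, Finset.mul_sum, mul_assoc]⟩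
  · rintro ⟨c, rfl⟩
    exact Ideal.sum_mem _ fun a ha =>
      Ideal.mul_mem_left _ _ (Ideal.subset_span ⟨a, ha, rfl⟩)

lemma sum_image_le {κ : Type*} [DecidableEq κ] (Λ : Finset κ) (f : κ → κ) (g : κ → ℕ) :
    ∑ b ∈ Λ.image f, g b ≤ ∑ a ∈ Λ, g (f a) := by
  induction Λ using Finset.induction_on with
  | empty => simp
  | @insert a Λ' h ih =>
      rw [Finset.image_insert, Finset.sum_insert h]
      by_cases hfa : f a ∈ Λ'.image f
      · rw [Finset.insert_eq_self.mpr hfa]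
        omega
      · rw [Finset.sum_insert hfa]
        omega




def IsWeakRegularSeq {k : ℕ} (s : Fin k → R) : Prop :=
  ∀ i : Fin k, ∀ x : R,
    s i * x ∈ Ideal.span (s '' {j | j < i}) → x ∈ Ideal.span (s '' {j | j < i})

def RegOn {ι : Type*} [DecidableEq ι] (s : ι → R) (U : Finset ι) : Prop :=
  ∀ T : Finset ι, T ⊆ U → ∀ l ∈ U, l ∉ T → ∀ x : R,
    s l * x ∈ Ideal.span (s '' ↑T) → x ∈ Ideal.span (s '' ↑T)

lemma regOn_univ {k : ℕ} (s : Fin k → R)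
    (hs : ∀ σ : Equiv.Perm (Fin k), IsWeakRegularSeq (s ∘ σ)) :
    RegOn s Finset.univ := by
  intro T _ l _ hlT x hx
  set t := T.card with ht
  have htk : t < k := by
    have h1 : (insert l T).card ≤ k := by
      simpa using Finset.card_le_card (Finset.subset_univ (insert l T))
    rw [Finset.card_insert_of_notMem hlT] at h1
    omega
  set it : Fin k := ⟨t, htk⟩ with hit
  -- equiv from {x // x < it} to {x // x ∈ T}
  have c1 : Fintype.card {x : Fin k // x < it} = Fintype.card {x : Fin k // x ∈ T} := by
    rw [Fintype.card_coe, ← ht]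
    have : Fintype.card {x : Fin k // x < it} = Fintype.card (Fin t) := by
      refine Fintype.card_congr ⟨fun x => ⟨x.1.1, x.2⟩, fun y => ⟨⟨y.1, y.2.trans htk⟩, y.2⟩,
        fun x => by ext; rfl, fun y => by ext; rfl⟩
    rw [this, Fintype.card_fin]
  have c2 : Fintype.card {x : Fin k // ¬ x < it} = Fintype.card {x : Fin k // ¬ x ∈ T} := by
    rw [Fintype.card_subtype_compl, Fintype.card_subtype_compl, c1]
  let e : {x : Fin k // x < it} ≃ {x : Fin k // x ∈ T} := Fintype.equivOfCardEq c1
  let f₀ : {x : Fin k // ¬ x < it} ≃ {x : Fin k // ¬ x ∈ T} := Fintype.equivOfCardEq c2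
  have hnit : ¬ it < it := lt_irrefl it
  let f : {x : Fin k // ¬ x < it} ≃ {x : Fin k // ¬ x ∈ T} :=
    f₀.trans (Equiv.swap (f₀ ⟨it, hnit⟩) ⟨l, hlT⟩)
  let σ : Equiv.Perm (Fin k) := e.subtypeCongr f
  have hσlt : ∀ (x : Fin k) (h : x < it), σ x = e ⟨x, h⟩ := by
    intro y h; simp [σ, Equiv.subtypeCongr, h]
  have hσit : σ it = l := by
    have : σ it = f ⟨it, hnit⟩ := by simp [σ, Equiv.subtypeCongr, hnit]
    rw [this]
    simp [f, Equiv.swap_apply_left]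
  have himg : σ '' {j | j < it} = ↑T := by
    apply Set.eq_of_subset_of_subset
    · rintro y ⟨j, hj, rfl⟩
      rw [hσlt j hj]
      exact (e ⟨j, hj⟩).2
    · intro y hy
      refine ⟨(e.symm ⟨y, hy⟩).1, (e.symm ⟨y, hy⟩).2, ?_⟩
      rw [hσlt _ (e.symm ⟨y, hy⟩).2]
      simp
  have := hs σ it x
  rw [Set.image_comp, himg] at this
  have hsl : (s ∘ σ) it = s l := by rw [Function.comp_apply, hσit]
  rw [hsl] at this
  exact this hx

lemma regQuot {ι : Type*} [DecidableEq ι] (s : ι → R) (U : Finset ι) (hreg : RegOn s U)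
    {j : ι} (hj : j ∈ U) :
    RegOn (fun l => Ideal.Quotient.mk (Ideal.span {s j}) (s l)) (U.erase j) := by
  intro T hT l hl hlT xb hx
  set mk := Ideal.Quotient.mk (Ideal.span {s j}) with hmk
  obtain ⟨x, rfl⟩ := Ideal.Quotient.mk_surjective xb
  have hlj : l ≠ j := (Finset.mem_erase.mp hl).1
  have hlU : l ∈ U := (Finset.mem_erase.mp hl).2
  have himg : ((fun l => mk (s l)) '' ↑T : Set _) = mk '' (s '' ↑T) := by
    rw [Set.image_image]
  rw [himg, ← Ideal.map_span mk] at hx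
  have hx2 : mk (s l * x) ∈ Ideal.map mk (Ideal.span (s '' ↑T)) := by
    rw [map_mul]; exact hx
  obtain ⟨y, hy, hyx⟩ := (Ideal.mem_map_iff_of_surjective mk Ideal.Quotient.mk_surjective).mp hx2
  have hker : s l * x - y ∈ Ideal.span {s j} := by
    rw [← Ideal.mk_ker (I := Ideal.span {s j})]
    simp only [RingHom.mem_ker, map_sub, hyx, ← hmk, sub_self]
  have hmem : s l * x ∈ Ideal.span (s '' ↑(insert j T)) := by
    have h1 : Ideal.span (s '' ↑(insert j T)) = Ideal.span (s '' ↑T) ⊔ Ideal.span {s j} := by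
      rw [Finset.coe_insert, Set.image_insert_eq, Ideal.span_insert]
      rw [sup_comm]
    rw [h1]
    have : s l * x = y + (s l * x - y) := by ring
    rw [this]
    exact Submodule.add_mem _ (Ideal.mem_sup_left hy) (Ideal.mem_sup_right hker)
  have hx3 : x ∈ Ideal.span (s '' ↑(insert j T)) := by
    refine hreg (insert j T) ?_ l hlU ?_ x hmem
    · intro a ha
      rcases Finset.mem_insert.mp ha with rfl | ha
      · exact hj
      · exact (Finset.mem_erase.mp (hT ha)).2
    · intro hlmem
      rcases Finset.mem_insert.mp hlmem with rfl | h
      · exact hlj rfl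
      · exact hlT h
  -- push down to quotient
  have : mk x ∈ Ideal.map mk (Ideal.span (s '' ↑(insert j T))) := Ideal.mem_map_of_mem mk hx3
  rw [Ideal.map_span mk, Set.image_image] at this
  have himg2 : ((fun a => mk (s a)) '' ↑(insert j T) : Set _) =
      insert 0 ((fun a => mk (s a)) '' ↑T) := by
    rw [Finset.coe_insert, Set.image_insert_eq]
    congr 1
    rw [hmk, Ideal.Quotient.eq_zero_iff_mem]
    exact Ideal.subset_span rfl
  have h0 : Ideal.span (insert 0 ((fun a => mk (s a)) '' ↑T)) =
      Ideal.span ((fun a => mk (s a)) '' ↑T) := Submodule.span_insert_zero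
  rw [himg2, h0] at this
  exact this





def BOn (s : ι → R) (U : Finset ι) : Prop :=
  ∀ Λ : Finset (ι → ℕ), (∀ a ∈ Λ, ∀ l, l ∉ U → a l = 0) → ∀ l ∈ U, (∀ a ∈ Λ, a l = 0) →
    ∀ x : R, s l * x ∈ Ideal.span (mon s '' ↑Λ) → x ∈ Ideal.span (mon s '' ↑Λ)

def AOn (s : ι → R) (U : Finset ι) : Prop :=
  ∀ (m : ℕ) (α : Fin m → ι → ℕ), (∀ i, ∀ l, l ∉ U → α i l = 0) →
    ∀ β : ι → ℕ, (∀ l, l ∉ U → β l = 0) → ∀ x : R,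
      x * mon s β ∈ Ideal.span (Set.range fun i => mon s (α i)) →
      ∃ d : Fin m → R, x = ∑ i, d i * mon s (fun l => max (α i l) (β l) - β l)

def MainOn (s : ι → R) (U : Finset ι) : Prop :=
  ∀ (N : ℕ) (α : Fin N → ι → ℕ), (∀ i, ∀ l, l ∉ U → α i l = 0) →
    ∀ c : Fin N → R, ∑ i, c i * mon s (α i) = 0 →
      c ∈ Submodule.span R
        {v : Fin N → R | ∃ i j : Fin N, i < j ∧
          v = Pi.single i (mon s (fun l => max (α i l) (α j l) - α i l))
            - Pi.single j (mon s (fun l => max (α i l) (α j l) - α j l))}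

lemma bOn_of_mainOn {s : ι → R} {U : Finset ι} (hM : MainOn s U) : BOn s U := by
  intro Λ hsupp l hlU hcop x hx
  set m := Λ.card with hm
  set J := Ideal.span (mon s '' (↑Λ : Set (ι → ℕ))) with hJ
  obtain ⟨c, hc⟩ := mem_span_image_finset_iff.mp hx
  set αh : Fin (m + 1) → ι → ℕ :=
    Fin.cons (ind l) (fun i => ((Λ.equivFin.symm i : Λ) : ι → ℕ)) with hαh
  set ch : Fin (m + 1) → R :=
    Fin.cons x (fun i => -(c ((Λ.equivFin.symm i : Λ) : ι → ℕ))) with hch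
  have hsyz : ∑ i, ch i * mon s (αh i) = 0 := by
    rw [Fin.sum_univ_succ]
    simp only [hch, hαh, Fin.cons_zero, Fin.cons_succ, mon_ind]
    have : ∑ i : Fin m, -c ((Λ.equivFin.symm i : Λ) : ι → ℕ) *
        mon s ((Λ.equivFin.symm i : Λ) : ι → ℕ) =
        ∑ a : Λ, -c (a : ι → ℕ) * mon s (a : ι → ℕ) := by
      exact Equiv.sum_comp Λ.equivFin.symm (fun a : Λ => -c (a : ι → ℕ) * mon s (a : ι → ℕ))
    rw [this, Finset.sum_coe_sort Λ (fun a => -c a * mon s a)]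
    rw [mul_comm x (s l), hc]
    rw [← Finset.sum_add_distrib]
    simp
  have hα0 : ∀ i, ∀ l', l' ∉ U → αh i l' = 0 := by
    intro i l' hl'
    refine Fin.cases ?_ ?_ i
    · simp only [hαh, Fin.cons_zero, ind]
      have : l' ≠ l := fun h => hl' (h ▸ hlU)
      simp [this]
    · intro i'
      simp only [hαh, Fin.cons_succ]
      exact hsupp _ (Finset.coe_mem _) l' hl'
  have hmem := hM (m + 1) αh hα0 ch hsyz
  -- project to coordinate 0
  have hx0 : x = ch 0 := by simp [hch]
  rw [hx0]
  have := span_push (LinearMap.proj (R := R) (0 : Fin (m + 1))) J ?_ hmem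
  · exact this
  · rintro g ⟨i, j, hij, rfl⟩
    simp only [LinearMap.proj_apply, Pi.sub_apply]
    by_cases hi : i = 0
    · subst hi
      have hj0 : j ≠ 0 := Fin.pos_iff_ne_zero.mp hij
      rw [Pi.single_eq_same, Pi.single_eq_of_ne (Ne.symm hj0)]
      obtain ⟨j', rfl⟩ : ∃ j' : Fin m, j = Fin.succ j' := ⟨j.pred hj0, (Fin.succ_pred _ _).symm⟩
      set a : ι → ℕ := ((Λ.equivFin.symm j' : Λ) : ι → ℕ) with ha
      have haΛ : a ∈ Λ := Finset.coe_mem _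
      have hal : a l = 0 := hcop a haΛ
      have hexp : (fun l' => max (αh 0 l') (αh (Fin.succ j') l') - αh 0 l') = a := by
        funext l'
        simp only [hαh, Fin.cons_zero, Fin.cons_succ, ind, ← ha]
        by_cases hl' : l' = l
        · subst hl'; simp [hal]
        · simp [hl']
      rw [hexp, sub_zero]
      exact Ideal.subset_span ⟨a, haΛ, rfl⟩
    · have hj : j ≠ 0 := by
        intro h; subst h; exact Fin.not_lt_zero i hij
      rw [Pi.single_eq_of_ne (Ne.symm hi), Pi.single_eq_of_ne (Ne.symm hj), sub_zero]
      exact J.zero_mem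


lemma span_top_of_zero_mem {s : ι → R} {Λ : Finset (ι → ℕ)} {a0 : ι → ℕ} (ha0 : a0 ∈ Λ)
    (hz : ∀ l', a0 l' = 0) (x : R) : x ∈ Ideal.span (mon s '' ↑Λ) := by
  have h1 : mon s a0 = 1 := by
    rw [mon]; apply Finset.prod_eq_one; intro l _; rw [hz l, pow_zero]
  have : (1 : R) ∈ Ideal.span (mon s '' ↑Λ) := h1 ▸ Ideal.subset_span ⟨a0, ha0, rfl⟩
  rw [(Ideal.eq_top_iff_one _).mpr this]
  trivial

lemma lemB {s : ι → R} {U : Finset ι} (hreg : RegOn s U)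
    (hq : ∀ j ∈ U, BOn (fun l => Ideal.Quotient.mk (Ideal.span {s j}) (s l)) (U.erase j)) :
    BOn s U := by
  suffices h : ∀ (σb : ℕ) (Λ : Finset (ι → ℕ)), (∑ a ∈ Λ, ∑ l, a l) ≤ σb →
      (∀ a ∈ Λ, ∀ l, l ∉ U → a l = 0) → ∀ l ∈ U, (∀ a ∈ Λ, a l = 0) →
      ∀ x : R, s l * x ∈ Ideal.span (mon s '' ↑Λ) → x ∈ Ideal.span (mon s '' ↑Λ) by
    intro Λ hsupp l hl hcop x hx
    exact h _ Λ le_rfl hsupp l hl hcop x hx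
  intro σb
  induction σb with
  | zero =>
      intro Λ hσ hsupp l hl hcop x hx
      by_cases hΛe : Λ = ∅
      · subst hΛe
        simp only [Finset.coe_empty, Set.image_empty, Ideal.span_empty,
          Submodule.mem_bot] at hx ⊢
        have h1 : s l * x ∈ Ideal.span (s '' ↑(∅ : Finset ι)) := by simp [hx]
        have := hreg ∅ (Finset.empty_subset U) l hl (Finset.notMem_empty l) x h1
        simpa using this
      · obtain ⟨a0, ha0⟩ := Finset.nonempty_iff_ne_empty.mpr hΛe
        by_cases h00 : ∀ l', a0 l' = 0
        · exact span_top_of_zero_mem ha0 h00 x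
        · exfalso
          push_neg at h00
          obtain ⟨j, hj0⟩ := h00
          have hj1 : 1 ≤ a0 j := Nat.one_le_iff_ne_zero.mpr hj0
          have h1 : 1 ≤ ∑ l', a0 l' :=
            le_trans hj1 (Finset.single_le_sum (f := a0) (fun _ _ => Nat.zero_le _)
              (Finset.mem_univ j))
          have h2 : ∑ l', a0 l' ≤ ∑ a ∈ Λ, ∑ l', a l' :=
            Finset.single_le_sum (f := fun a => ∑ l', a l') (fun _ _ => Nat.zero_le _) ha0
          exact Nat.not_succ_le_zero 0 (h1.trans (h2.trans hσ))
  | succ σb ih =>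
      intro Λ hσ hsupp l hl hcop x hx
      by_cases hΛe : Λ = ∅
      · subst hΛe
        simp only [Finset.coe_empty, Set.image_empty, Ideal.span_empty,
          Submodule.mem_bot] at hx ⊢
        have h1 : s l * x ∈ Ideal.span (s '' ↑(∅ : Finset ι)) := by simp [hx]
        have := hreg ∅ (Finset.empty_subset U) l hl (Finset.notMem_empty l) x h1
        simpa using this
      · obtain ⟨a0, ha0⟩ := Finset.nonempty_iff_ne_empty.mpr hΛe
        by_cases h00 : ∀ l', a0 l' = 0
        · exact span_top_of_zero_mem ha0 h00 x
        push_neg at h00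
        obtain ⟨j, hj0⟩ := h00
        have hjU : j ∈ U := by
          by_contra h; exact hj0 (hsupp a0 ha0 j h)
        have hjl : j ≠ l := fun h => hj0 (h ▸ hcop a0 ha0)
        set mkq := Ideal.Quotient.mk (Ideal.span {s j}) with hmkq
        set sb : ι → R ⧸ Ideal.span {s j} := fun l' => mkq (s l') with hsb
        have hBq := hq j hjU
        set ΛA := Λ.filter (fun a => a j = 0) with hΛA
        have hΛAsub : ΛA ⊆ Λ := Finset.filter_subset _ _
        have hmm : ∀ a, mkq (mon s a) = mon sb a := fun a => by
          simp [mon, map_prod, map_pow, hsb]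
        have hmkj : mkq (s j) = 0 :=
          Ideal.Quotient.eq_zero_iff_mem.mpr (Ideal.subset_span rfl)
        obtain ⟨c, hc⟩ := mem_span_image_finset_iff.mp hx
        -- membership in quotient
        have hqmem : sb l * mkq x ∈ Ideal.span (mon sb '' ↑ΛA) := by
          have he1 : sb l * mkq x = ∑ a ∈ Λ, mkq (c a) * mon sb a := by
            rw [hsb]
            rw [← map_mul, hc, map_sum]
            refine Finset.sum_congr rfl fun a _ => ?_
            rw [map_mul, hmm]
          have he2 : ∑ a ∈ Λ, mkq (c a) * mon sb a = ∑ a ∈ ΛA, mkq (c a) * mon sb a := by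
            rw [← Finset.sum_filter_add_sum_filter_not Λ (fun a => a j = 0)
              (fun a => mkq (c a) * mon sb a)]
            have hz : ∀ a ∈ Λ.filter (fun a => ¬ a j = 0), mkq (c a) * mon sb a = 0 := by
              intro a ha
              have haj : a j ≠ 0 := (Finset.mem_filter.mp ha).2
              have : mon sb a = 0 := by
                rw [← hmm, mon_eq_mul_dsub s haj, map_mul, hmkj, zero_mul]
              rw [this, mul_zero]
            rw [Finset.sum_eq_zero hz, add_zero]
          rw [he1, he2]
          exact mem_span_image_finset_iff.mpr ⟨fun a => mkq (c a), rfl⟩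
        have hlerase : l ∈ U.erase j := Finset.mem_erase.mpr ⟨Ne.symm hjl, hl⟩
        have hsuppA : ∀ a ∈ ΛA, ∀ l', l' ∉ U.erase j → a l' = 0 := by
          intro a ha l' hl'
          by_cases hlj : l' = j
          · exact hlj ▸ (Finset.mem_filter.mp ha).2
          · refine hsupp a (hΛAsub ha) l' ?_
            intro hlu
            exact hl' (Finset.mem_erase.mpr ⟨hlj, hlu⟩)
        have hcopA : ∀ a ∈ ΛA, a l = 0 := fun a ha => hcop a (hΛAsub ha)
        have hq1 := hBq ΛA hsuppA l hlerase hcopA (mkq x) hqmem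
        -- pull back to R
        have himgq : (mon sb '' ↑ΛA : Set _) = ⇑mkq '' (mon s '' ↑ΛA) := by
          rw [Set.image_image]
          exact Set.image_congr fun a _ => (hmm a).symm
        rw [himgq, ← Ideal.map_span] at hq1
        obtain ⟨u, hu, hux⟩ :=
          (Ideal.mem_map_iff_of_surjective mkq Ideal.Quotient.mk_surjective).mp hq1
        have hxu : x - u ∈ Ideal.span {s j} := by
          rw [← Ideal.mk_ker (I := Ideal.span {s j})]
          simp only [RingHom.mem_ker, map_sub, hux, ← hmkq, sub_self]
        obtain ⟨v, hv⟩ := Ideal.mem_span_singleton'.mp hxu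
        have hxuv : x = u + s j * v := by linear_combination -hv
        have huJ : u ∈ Ideal.span (mon s '' ↑Λ) :=
          Ideal.span_mono (Set.image_mono (by exact_mod_cast hΛAsub)) hu
        have h2 : s l * (s j * v) ∈ Ideal.span (mon s '' ↑Λ) := by
          have he : s l * (s j * v) = s l * x - s l * u := by rw [hxuv]; ring
          rw [he]
          exact sub_mem hx (Ideal.mul_mem_left _ _ huJ)
        obtain ⟨c', hc'⟩ := mem_span_image_finset_iff.mp h2
        set v' : R := ∑ a ∈ Λ.filter (fun a => ¬ a j = 0), c' a * mon s (dsub a j) with hv'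
        have h3 : s j * (s l * v - v') ∈ Ideal.span (mon s '' ↑ΛA) := by
          have e1 : s j * v' = ∑ a ∈ Λ.filter (fun a => ¬ a j = 0), c' a * mon s a := by
            rw [hv', Finset.mul_sum]
            refine Finset.sum_congr rfl fun a ha => ?_
            have haj : a j ≠ 0 := (Finset.mem_filter.mp ha).2
            rw [mon_eq_mul_dsub s haj]; ring
          have e2 : s j * (s l * v) = ∑ a ∈ Λ, c' a * mon s a := by
            rw [← hc']; ring
          have expand : s j * (s l * v - v') = ∑ a ∈ ΛA, c' a * mon s a := by
            rw [mul_sub, e2, e1,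
              ← Finset.sum_filter_add_sum_filter_not Λ (fun a => a j = 0)
                (fun a => c' a * mon s a)]
            ring_nf
            rfl
          rw [expand]
          exact mem_span_image_finset_iff.mpr ⟨c', rfl⟩
        -- measure bound for ΛA
        have hja : a0 j ≠ 0 := hj0
        have hΛAe : ΛA ⊆ Λ.erase a0 := by
          intro a ha
          refine Finset.mem_erase.mpr ⟨?_, hΛAsub ha⟩
          intro h
          exact hja (h ▸ (Finset.mem_filter.mp ha).2)
        have hsA : ∑ a ∈ ΛA, ∑ l', a l' ≤ σb := by
          have b1 : ∑ a ∈ ΛA, ∑ l', a l' ≤ ∑ a ∈ Λ.erase a0, ∑ l', a l' :=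
            Finset.sum_le_sum_of_subset hΛAe
          have b2 : ∑ a ∈ Λ.erase a0, ∑ l', a l' + ∑ l', a0 l' = ∑ a ∈ Λ, ∑ l', a l' :=
            Finset.sum_erase_add Λ _ ha0
          have b3 : 1 ≤ ∑ l', a0 l' :=
            le_trans (Nat.one_le_iff_ne_zero.mpr hj0)
              (Finset.single_le_sum (f := a0) (fun _ _ => Nat.zero_le _) (Finset.mem_univ j))
          have b4 : (∑ a ∈ Λ.erase a0, ∑ l', a l') + 1 ≤ σb + 1 := by
            calc (∑ a ∈ Λ.erase a0, ∑ l', a l') + 1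
                ≤ (∑ a ∈ Λ.erase a0, ∑ l', a l') + ∑ l', a0 l' := Nat.add_le_add_left b3 _
              _ = ∑ a ∈ Λ, ∑ l', a l' := b2
              _ ≤ σb + 1 := hσ
          exact b1.trans (Nat.succ_le_succ_iff.mp b4)
        have hcopAj : ∀ a ∈ ΛA, a j = 0 := fun a ha => (Finset.mem_filter.mp ha).2
        have hA1 : s l * v - v' ∈ Ideal.span (mon s '' ↑ΛA) :=
          ih ΛA hsA (fun a ha => hsupp a (hΛAsub ha)) j hjU hcopAj _ h3
        -- Λ1 and its properties
        set Λ1 := Λ.image (fun a => dsub a j) with hΛ1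
        have hdsubA : ∀ a, a j = 0 → dsub a j = a := by
          intro a haj
          funext l'
          by_cases hlj : l' = j
          · subst hlj; simp [dsub, ind, haj]
          · simp [dsub, ind, hlj]
        have hsub1 : Ideal.span (mon s '' ↑ΛA) ≤ Ideal.span (mon s '' ↑Λ1) := by
          rw [Ideal.span_le]
          rintro g ⟨a, haA, rfl⟩
          have haA' : a ∈ ΛA := haA
          have : a ∈ Λ1 := by
            rw [hΛ1]
            refine Finset.mem_image.mpr ⟨a, hΛAsub haA', hdsubA a (hcopAj a haA')⟩
          exact Ideal.subset_span ⟨a, this, rfl⟩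
        have hv'1 : v' ∈ Ideal.span (mon s '' ↑Λ1) := by
          rw [hv']
          refine Ideal.sum_mem _ fun a ha => ?_
          refine Ideal.mul_mem_left _ _ (Ideal.subset_span ⟨dsub a j, ?_, rfl⟩)
          exact Finset.mem_image.mpr ⟨a, Finset.filter_subset _ _ ha, rfl⟩
        have h4 : s l * v ∈ Ideal.span (mon s '' ↑Λ1) := by
          have he : s l * v = (s l * v - v') + v' := by ring
          rw [he]
          exact add_mem (hsub1 hA1) hv'1
        -- measure bound for Λ1
        have hs1 : ∑ a ∈ Λ1, ∑ l', a l' ≤ σb := by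
          have b1 : ∑ b ∈ Λ1, ∑ l', b l' ≤ ∑ a ∈ Λ, ∑ l', dsub a j l' :=
            sum_image_le Λ (fun a => dsub a j) (fun b => ∑ l', b l')
          have b2 : ∑ a ∈ Λ, ∑ l', dsub a j l' < ∑ a ∈ Λ, ∑ l', a l' := by
            refine Finset.sum_lt_sum
              (fun a _ => Finset.sum_le_sum fun l' _ => Nat.sub_le _ _)
              ⟨a0, ha0, Finset.sum_lt_sum (fun l' _ => Nat.sub_le _ _)
                ⟨j, Finset.mem_univ j, ?_⟩⟩
            have hdd : dsub a0 j j = a0 j - 1 := by simp [dsub, ind]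
            rw [hdd]
            exact Nat.sub_lt (Nat.pos_of_ne_zero hj0) Nat.one_pos
          exact b1.trans (Nat.lt_succ_iff.mp (lt_of_lt_of_le b2 hσ))
        have hsupp1 : ∀ b ∈ Λ1, ∀ l', l' ∉ U → b l' = 0 := by
          intro b hb l' hl'
          obtain ⟨a, haΛ, rfl⟩ := Finset.mem_image.mp hb
          have := hsupp a haΛ l' hl'
          simp only [dsub, this, Nat.zero_sub]
        have hcop1 : ∀ b ∈ Λ1, b l = 0 := by
          intro b hb
          obtain ⟨a, haΛ, rfl⟩ := Finset.mem_image.mp hb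
          have h5 := hcop a haΛ
          simp only [dsub, h5, ind, if_neg (Ne.symm hjl), Nat.zero_sub]
        have h5 : v ∈ Ideal.span (mon s '' ↑Λ1) := ih Λ1 hs1 hsupp1 l hl hcop1 v h4
        -- conclude
        have h6 : s j * v ∈ Ideal.span (mon s '' ↑Λ) := by
          refine mul_mem_of_span (s j) ?_ h5
          rintro g ⟨b, hb, rfl⟩
          obtain ⟨a, haΛ, rfl⟩ := Finset.mem_image.mp hb
          by_cases haj : a j = 0
          · rw [hdsubA a haj]
            exact Ideal.mul_mem_left _ _ (Ideal.subset_span ⟨a, haΛ, rfl⟩)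
          · rw [← mon_eq_mul_dsub s haj]
            exact Ideal.subset_span ⟨a, haΛ, rfl⟩
        rw [hxuv]
        exact add_mem huJ h6


lemma dsub_eq_self {a : ι → ℕ} {j : ι} (h : a j = 0) : dsub a j = a := by
  funext l'
  by_cases hlj : l' = j
  · subst hlj; simp [dsub, ind, h]
  · simp [dsub, ind, hlj]

lemma sum_dsub_lt {β : ι → ℕ} {l : ι} (h : β l ≠ 0) :
    ∑ l', dsub β l l' < ∑ l', β l' := by
  refine Finset.sum_lt_sum (fun l' _ => Nat.sub_le _ _) ⟨l, Finset.mem_univ l, ?_⟩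
  have hdd : dsub β l l = β l - 1 := by simp [dsub, ind]
  rw [hdd]
  exact Nat.sub_lt (Nat.pos_of_ne_zero h) Nat.one_pos

lemma nat_maxsub (A B : ℕ) (hB : 1 ≤ B) :
    max (A - 1) (B - 1) - (B - 1) = max A B - B := by omega

lemma lemA {s : ι → R} {U : Finset ι} (hB : BOn s U) : AOn s U := by
  suffices h : ∀ (βb m : ℕ) (α : Fin m → ι → ℕ), (∀ i, ∀ l, l ∉ U → α i l = 0) →
      ∀ β : ι → ℕ, (∀ l, l ∉ U → β l = 0) → (∑ l, β l) ≤ βb → ∀ x : R,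
      x * mon s β ∈ Ideal.span (Set.range fun i => mon s (α i)) →
      ∃ d : Fin m → R, x = ∑ i, d i * mon s (fun l => max (α i l) (β l) - β l) by
    intro m α hα β hβ x hx
    exact h (∑ l, β l) m α hα β hβ le_rfl x hx
  intro βb
  induction βb with
  | zero =>
      intro m α hα β hβ hble x hx
      by_cases hβ0 : ∀ l, β l = 0
      · have hm1 : mon s β = 1 := by
          rw [mon]; apply Finset.prod_eq_one; intro l _; rw [hβ0 l, pow_zero]
        rw [hm1, mul_one] at hx
        obtain ⟨d, hd⟩ := (Submodule.mem_span_range_iff_exists_fun R).mp hx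
        refine ⟨d, ?_⟩
        rw [← hd]
        refine Finset.sum_congr rfl fun i _ => ?_
        rw [smul_eq_mul]
        congr 1
        refine mon_congr s fun l => ?_
        rw [hβ0 l]
        simp
      · exfalso
        push_neg at hβ0
        obtain ⟨l, hβl⟩ := hβ0
        have h1 : 1 ≤ ∑ l', β l' :=
          le_trans (Nat.one_le_iff_ne_zero.mpr hβl)
            (Finset.single_le_sum (f := β) (fun _ _ => Nat.zero_le _) (Finset.mem_univ l))
        exact Nat.not_succ_le_zero 0 (h1.trans hble)
  | succ βb ih =>
      intro m α hα β hβ hble x hx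
      by_cases hβ0 : ∀ l, β l = 0
      · have hm1 : mon s β = 1 := by
          rw [mon]; apply Finset.prod_eq_one; intro l _; rw [hβ0 l, pow_zero]
        rw [hm1, mul_one] at hx
        obtain ⟨d, hd⟩ := (Submodule.mem_span_range_iff_exists_fun R).mp hx
        refine ⟨d, ?_⟩
        rw [← hd]
        refine Finset.sum_congr rfl fun i _ => ?_
        rw [smul_eq_mul]
        congr 1
        refine mon_congr s fun l => ?_
        rw [hβ0 l]
        simp
      push_neg at hβ0
      obtain ⟨l, hβl⟩ := hβ0
      have hlU : l ∈ U := by by_contra h'; exact hβl (hβ l h')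
      obtain ⟨c, hc⟩ := (Submodule.mem_span_range_iff_exists_fun R).mp hx
      set β' := dsub β l with hβ'
      have hmonβ : mon s β = s l * mon s β' := mon_eq_mul_dsub s hβl
      set F0 := Finset.univ.filter (fun i : Fin m => α i l = 0) with hF0
      set F1 := Finset.univ.filter (fun i : Fin m => ¬ α i l = 0) with hF1
      set v : R := ∑ i ∈ F1, c i * mon s (dsub (α i) l) with hv
      have hkey : s l * (x * mon s β' - v) = ∑ i ∈ F0, c i * mon s (α i) := by
        have e1 : s l * (x * mon s β') = x * mon s β := by rw [hmonβ]; ring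
        have e2 : s l * v = ∑ i ∈ F1, c i * mon s (α i) := by
          rw [hv, Finset.mul_sum]
          refine Finset.sum_congr rfl fun i hi => ?_
          have hil : α i l ≠ 0 := (Finset.mem_filter.mp hi).2
          rw [mon_eq_mul_dsub s hil]; ring
        have e3 : ∑ i ∈ F0, c i * mon s (α i) + ∑ i ∈ F1, c i * mon s (α i)
            = x * mon s β := by
          rw [hF0, hF1,
            Finset.sum_filter_add_sum_filter_not Finset.univ (fun i => α i l = 0)
              (fun i => c i * mon s (α i))]
          rw [← hc]
          refine Finset.sum_congr rfl fun i _ => by rw [smul_eq_mul]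
        rw [mul_sub, e1, e2, ← e3]
        ring
      have hmem : s l * (x * mon s β' - v) ∈ Ideal.span (mon s '' ↑(F0.image α)) := by
        rw [hkey]
        refine Ideal.sum_mem _ fun i hi => ?_
        exact Ideal.mul_mem_left _ _
          (Ideal.subset_span ⟨α i, Finset.mem_coe.mpr (Finset.mem_image_of_mem α hi), rfl⟩)
      have hBres := hB (F0.image α)
        (fun a ha => by
          obtain ⟨i, _, rfl⟩ := Finset.mem_image.mp ha
          exact hα i)
        l hlU
        (fun a ha => by
          obtain ⟨i, hi, rfl⟩ := Finset.mem_image.mp ha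
          exact (Finset.mem_filter.mp hi).2)
        _ hmem
      have hx' : x * mon s β' ∈ Ideal.span (Set.range fun i => mon s (dsub (α i) l)) := by
        have hle : Ideal.span (mon s '' ↑(F0.image α)) ≤
            Ideal.span (Set.range fun i => mon s (dsub (α i) l)) := by
          rw [Ideal.span_le]
          rintro g ⟨a, ha, rfl⟩
          obtain ⟨i, hi, rfl⟩ := Finset.mem_image.mp ha
          rw [← dsub_eq_self (j := l) (Finset.mem_filter.mp hi).2]
          exact Ideal.subset_span ⟨i, rfl⟩
        have hvmem : v ∈ Ideal.span (Set.range fun i => mon s (dsub (α i) l)) := by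
          rw [hv]
          exact Ideal.sum_mem _ fun i _ =>
            Ideal.mul_mem_left _ _ (Ideal.subset_span ⟨i, rfl⟩)
        have he : x * mon s β' = (x * mon s β' - v) + v := by ring
        rw [he]
        exact add_mem (hle hBres) hvmem
      have hble' : (∑ l', β' l') ≤ βb :=
        Nat.lt_succ_iff.mp (lt_of_lt_of_le (sum_dsub_lt hβl) hble)
      obtain ⟨d, hd⟩ := ih m (fun i => dsub (α i) l)
        (fun i l' hl' => by
          have := hα i l' hl'
          simp only [dsub, this, Nat.zero_sub])
        β' (fun l' hl' => by
          have := hβ l' hl'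
          simp only [β', dsub, this, Nat.zero_sub])
        hble' x hx'
      refine ⟨d, ?_⟩
      rw [hd]
      refine Finset.sum_congr rfl fun i _ => ?_
      congr 1
      refine mon_congr s fun l' => ?_
      by_cases hll : l' = l
      · subst hll
        have e1 : dsub (α i) l' l' = α i l' - 1 := by simp [dsub, ind]
        have e2 : β' l' = β l' - 1 := by simp [β', dsub, ind]
        rw [e1, e2]
        exact nat_maxsub _ _ (Nat.one_le_iff_ne_zero.mpr hβl)
      · have e1 : dsub (α i) l l' = α i l' := by simp [dsub, ind, hll]
        have e2 : β' l' = β l' := by simp [β', dsub, ind, hll]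
        rw [e1, e2]

lemma sum_single_mul {n : ℕ} (a : Fin n) (X : R) (f : Fin n → R) :
    ∑ i, (Pi.single a X : Fin n → R) i * f i = X * f a := by
  rw [Finset.sum_eq_single a (fun b _ hb => by rw [Pi.single_eq_of_ne hb, zero_mul])
    (fun h => absurd (Finset.mem_univ a) h)]
  rw [Pi.single_eq_same]

lemma nat_maxsub_add (A B : ℕ) : (max A B - A) + A = max A B :=
  Nat.sub_add_cancel (le_max_left A B)

lemma mon_maxsub_mul (s : ι → R) (a b : ι → ℕ) :
    mon s (fun l => max (a l) (b l) - a l) * mon s a = mon s (fun l => max (a l) (b l)) := by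
  rw [← mon_add]
  exact mon_congr s fun l => nat_maxsub_add _ _

lemma mon_maxsub_mul' (s : ι → R) (a b : ι → ℕ) :
    mon s (fun l => max (a l) (b l) - b l) * mon s b = mon s (fun l => max (a l) (b l)) := by
  rw [← mon_add]
  refine mon_congr s fun l => ?_
  rw [max_comm (a l) (b l)] at *
  exact nat_maxsub_add _ _

/-- extension by zero -/
def extz {N : ℕ} : (Fin N → R) →ₗ[R] (Fin (N + 1) → R) where
  toFun v := Fin.snoc v 0
  map_add' u v := by
    funext j
    refine Fin.lastCases ?_ (fun m => ?_) j
    · simp [Fin.snoc_last]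
    · simp [Fin.snoc_castSucc]
  map_smul' r v := by
    funext j
    refine Fin.lastCases ?_ (fun m => ?_) j
    · simp [Fin.snoc_last]
    · simp [Fin.snoc_castSucc]

lemma extz_single {N : ℕ} (i : Fin N) (X : R) :
    extz (Pi.single i X) = Pi.single i.castSucc X := by
  have hE : (extz (Pi.single i X : Fin N → R) : Fin (N+1) → R)
      = Fin.snoc (Pi.single i X : Fin N → R) 0 := rfl
  rw [hE]
  funext m
  refine Fin.lastCases ?_ (fun m => ?_) m
  · rw [Fin.snoc_last, Pi.single_eq_of_ne (Fin.castSucc_lt_last i).ne']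
  · rw [Fin.snoc_castSucc]
    by_cases h : i = m
    · subst h; rw [Pi.single_eq_same, Pi.single_eq_same]
    · have h2 : m.castSucc ≠ i.castSucc := fun hh => h (Fin.castSucc_inj.mp hh).symm
      rw [Pi.single_eq_of_ne (Ne.symm h), Pi.single_eq_of_ne h2]

lemma lemMain {s : ι → R} {U : Finset ι} (hA : AOn s U) : MainOn s U := by
  intro N
  induction N with
  | zero =>
      intro α hα c hc
      have hc0 : c = 0 := Subsingleton.elim c 0
      rw [hc0]
      exact Submodule.zero_mem _
  | succ N ih =>
      intro α hα c hc
      set β := α (Fin.last N) with hβ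
      have hlastmem : c (Fin.last N) * mon s β ∈
          Ideal.span (Set.range fun i : Fin N => mon s (α i.castSucc)) := by
        have h1 : ∑ i : Fin N, c i.castSucc * mon s (α i.castSucc)
            + c (Fin.last N) * mon s β = 0 := by
          rw [← hc, Fin.sum_univ_castSucc]
        have h2 : c (Fin.last N) * mon s β
            = ∑ i : Fin N, -(c i.castSucc) * mon s (α i.castSucc) := by
          have h3 : ∑ i : Fin N, -(c i.castSucc) * mon s (α i.castSucc)
              = -∑ i : Fin N, c i.castSucc * mon s (α i.castSucc) := by
            simp [neg_mul, Finset.sum_neg_distrib]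
          rw [h3]
          linear_combination h1
        rw [h2]
        exact Ideal.sum_mem _ fun i _ =>
          Ideal.mul_mem_left _ _ (Ideal.subset_span ⟨i, rfl⟩)
      obtain ⟨d, hd⟩ := hA N (fun i => α i.castSucc) (fun i => hα _) β (hα _)
        (c (Fin.last N)) hlastmem
      set S : Set (Fin (N + 1) → R) :=
        {v : Fin (N+1) → R | ∃ i j : Fin (N+1), i < j ∧
          v = Pi.single i (mon s (fun l => max (α i l) (α j l) - α i l))
            - Pi.single j (mon s (fun l => max (α i l) (α j l) - α j l))} with hS
      set σg : Fin N → (Fin (N + 1) → R) := fun i =>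
        Pi.single i.castSucc
            (mon s (fun l => max (α i.castSucc l) (α (Fin.last N) l) - α i.castSucc l))
          - Pi.single (Fin.last N)
            (mon s (fun l => max (α i.castSucc l) (α (Fin.last N) l) - α (Fin.last N) l))
        with hσg
      have hσgS : ∀ i, σg i ∈ S := fun i =>
        ⟨i.castSucc, Fin.last N, Fin.castSucc_lt_last i, rfl⟩
      set c' := c + ∑ i, d i • σg i with hc'
      have hc'last : c' (Fin.last N) = 0 := by
        rw [hc', Pi.add_apply, Finset.sum_apply]
        have he : ∀ i : Fin N, (d i • σg i) (Fin.last N)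
            = -(d i * mon s (fun l => max (α i.castSucc l) (β l) - β l)) := by
          intro i
          rw [Pi.smul_apply, hσg]
          simp only [Pi.sub_apply, Pi.single_eq_same,
            Pi.single_eq_of_ne (Fin.castSucc_lt_last i).ne', smul_eq_mul]
          ring
        rw [Finset.sum_congr rfl fun i _ => he i, Finset.sum_neg_distrib, ← hd]
        ring
      have hsyz' : ∑ i, c' i * mon s (α i) = 0 := by
        have hinner : ∀ j : Fin N, ∑ i, σg j i * mon s (α i) = 0 := by
          intro j
          rw [hσg]
          simp only [Pi.sub_apply, sub_mul, Finset.sum_sub_distrib]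
          rw [sum_single_mul, sum_single_mul, ← hβ, mon_maxsub_mul, mon_maxsub_mul']
          ring
        calc ∑ i, c' i * mon s (α i)
            = ∑ i, c i * mon s (α i)
              + ∑ j, d j * (∑ i, σg j i * mon s (α i)) := by
              rw [hc']
              simp only [Pi.add_apply, Finset.sum_apply, add_mul, Finset.sum_add_distrib,
                Pi.smul_apply, smul_eq_mul]
              congr 1
              have hdist : ∀ x : Fin (N+1), (∑ j, d j * σg j x) * mon s (α x)
                  = ∑ j, d j * (σg j x * mon s (α x)) := by
                intro x
                rw [Finset.sum_mul]
                exact Finset.sum_congr rfl fun j _ => by ring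
              rw [Finset.sum_congr rfl fun x _ => hdist x, Finset.sum_comm]
              exact Finset.sum_congr rfl fun j _ => (Finset.mul_sum _ _ _).symm
          _ = 0 := by
              rw [hc, Finset.sum_congr rfl fun j _ => by rw [hinner j, mul_zero]]
              simp
      set c'' := fun i : Fin N => c' i.castSucc with hc''
      have hsyz'' : ∑ i, c'' i * mon s (α i.castSucc) = 0 := by
        have := hsyz'
        rw [Fin.sum_univ_castSucc, hc'last, zero_mul, add_zero] at this
        exact this
      have hmem'' := ih (fun i => α i.castSucc) (fun i => hα _) c'' hsyz''
      have hc'E : c' = extz c'' := by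
        have hE2 : (extz c'' : Fin (N+1) → R) = Fin.snoc c'' 0 := rfl
        rw [hE2]
        funext j
        refine Fin.lastCases ?_ (fun m => ?_) j
        · rw [hc'last, Fin.snoc_last]
        · rw [Fin.snoc_castSucc]
      have hc'S : c' ∈ Submodule.span R S := by
        rw [hc'E]
        refine span_push extz (Submodule.span R S) ?_ hmem''
        rintro g ⟨i, j, hij, rfl⟩
        rw [map_sub, extz_single, extz_single]
        exact Submodule.subset_span
          ⟨i.castSucc, j.castSucc, by rwa [Fin.castSucc_lt_castSucc_iff], rfl⟩
      have hfin : c = c' - ∑ i, d i • σg i := by rw [hc']; abel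
      rw [hfin]
      exact sub_mem hc'S (Submodule.sum_mem _ fun i _ =>
        Submodule.smul_mem _ _ (Submodule.subset_span (hσgS i)))

lemma mainAll {ι : Type*} [Fintype ι] [DecidableEq ι] :
    ∀ (n : ℕ) {R : Type u_2} [inst : CommRing R] (s : ι → R) (U : Finset ι),
      U.card ≤ n → RegOn s U → MainOn s U := by
  intro n
  induction n with
  | zero =>
      intro R _ s U hcard hreg
      have hU : U = ∅ := Finset.card_eq_zero.mp (Nat.le_zero.mp hcard)
      refine lemMain (lemA (lemB hreg ?_))
      intro j hj
      rw [hU] at hj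
      exact absurd hj (Finset.notMem_empty j)
  | succ n ih =>
      intro R _ s U hcard hreg
      refine lemMain (lemA (lemB hreg ?_))
      intro j hj
      refine bOn_of_mainOn (ih (fun l => Ideal.Quotient.mk (Ideal.span {s j}) (s l))
        (U.erase j) ?_ (regQuot s U hreg hj))
      rw [Finset.card_erase_of_mem hj]
      omega

end SyzAux

/-- syzygies of monomials in a permutable weak regular sequence. -/
theorem syzygies_of_sMonomials
    {R : Type*} [CommRing R] {k : ℕ} (s : Fin k → R)
    (hs : IsPermutableWeakRegularSeq s)
    {N : ℕ} (α : Fin N → Fin k → ℕ) (a : Fin N → R)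
    (ha : ∀ i, a i = ∏ l, s l ^ α i l) (c : Fin N → R) :
    (∑ i, c i * a i = 0) ↔
      c ∈ Submodule.span R
        {v : Fin N → R | ∃ i j : Fin N, i < j ∧
          v = Pi.single i (∏ l, s l ^ (max (α i l) (α j l) - α i l))
            - Pi.single j (∏ l, s l ^ (max (α i l) (α j l) - α j l))} := by
  classical
  constructor
  · intro hsum
    have hreg : SyzAux.RegOn s Finset.univ := SyzAux.regOn_univ s hs.2
    have hmain := SyzAux.mainAll (Finset.univ : Finset (Fin k)).card s Finset.univ
      le_rfl hreg
    have hsum' : ∑ i, c i * SyzAux.mon s (α i) = 0 := by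
      rw [← hsum]
      exact Finset.sum_congr rfl fun i _ => by rw [ha i]; rfl
    exact hmain N α (fun i l hl => absurd (Finset.mem_univ l) hl) c hsum'
  · intro hmem
    set L : (Fin N → R) →ₗ[R] R :=
      { toFun := fun v => ∑ i, v i * a i
        map_add' := fun u v => by simp [add_mul, Finset.sum_add_distrib]
        map_smul' := fun r v => by simp [smul_eq_mul, Finset.mul_sum, mul_assoc] } with hL
    have h0 := SyzAux.span_push L ⊥ ?_ hmem
    · simp only [Submodule.mem_bot] at h0
      exact h0
    · rintro g ⟨i, j, hij, rfl⟩
      simp only [Submodule.mem_bot]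
      have hsingle : ∀ (m : Fin N) (X : R), L (Pi.single m X) = X * a m := fun m X =>
        SyzAux.sum_single_mul m X a
      rw [map_sub, hsingle, hsingle, ha i, ha j]
      show SyzAux.mon s (fun l => max (α i l) (α j l) - α i l) * SyzAux.mon s (α i)
          - SyzAux.mon s (fun l => max (α i l) (α j l) - α j l) * SyzAux.mon s (α j) = 0
      rw [SyzAux.mon_maxsub_mul, SyzAux.mon_maxsub_mul', sub_self]
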